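/- Let ε ∈ (0,1], suppose μ0 s ≥ 1, max_{j,ℓ} |b_j[ℓ]|² ≤ μ0, and suppose the local RIP event ‖P_T (G G* − G A* A G*) P_T‖ ≤ ε holds, where T is the tangent space at the rank-r matrix Z♮ = H(X♮). Let Z^t ∈ C^{s n1 × n2} be any rank-r matrix with ‖Z^t − Z♮‖_F ≤ σ_r(Z♮) ε / (16 √((1+ε) μ0 s)) and let T_t be the tangent space at Z^t. Then ‖A G* P_{T_t}‖ ≤ 3 √(1+ε), where the operator norm is from (C^{s n1 × n2}, Frobenius norm) to (C^n, ℓ2 norm). -/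

import Mathlib

open Matrix MeasureTheory ProbabilityTheory
open scoped BigOperators ComplexConjugate

noncomputable section

/-- Frobenius norm of a complex matrix. -/
def frob {m p : Type*} [Fintype m] [Fintype p] (X : Matrix m p ℂ) : ℝ :=
  Real.sqrt (∑ i, ∑ j, ‖X i j‖ ^ 2)

/-- Euclidean (ℓ2) norm of a complex vector. -/
def l2 {m : Type*} [Fintype m] (v : m → ℂ) : ℝ :=
  Real.sqrt (∑ i, ‖v i‖ ^ 2)

/-- Frobenius inner product ⟨A, B⟩ = trace(Aᴴ B). -/
def frobInner {m p : Type*} [Fintype m] [Fintype p] (A B : Matrix m p ℂ) : ℂ :=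
  ∑ i, ∑ j, conj (A i j) * B i j

/-- Spectral norm (ℓ2 → ℓ2 operator norm). -/
def specNorm {m p : Type*} [Fintype m] [Fintype p] (Z : Matrix m p ℂ) : ℝ :=
  sSup {t | ∃ v : p → ℂ, (∑ j, ‖v j‖ ^ 2) ≤ 1 ∧ t = l2 (Z.mulVec v)}

/-- The `k`-th largest singular value (1-indexed), characterized as the distance
in spectral norm to the set of matrices of rank < k. -/
def sval {m p : Type*} [Fintype m] [Fintype p] (Z : Matrix m p ℂ) (k : ℕ) : ℝ :=
  sInf {t | ∃ Y : Matrix m p ℂ, Y.rank < k ∧ t = specNorm (Z - Y)}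

/-- The vectorized Hankel lift. -/
def vhl {s n n1 n2 : ℕ} (hn : n1 + n2 = n + 1) (X : Matrix (Fin s) (Fin n) ℂ) :
    Matrix (Fin n1 × Fin s) (Fin n2) ℂ :=
  Matrix.of fun p k => X p.2 ⟨p.1.1 + k.1, by have h1 := p.1.2; have h2 := k.2; omega⟩

/-- The adjoint of the vectorized Hankel lift. -/
def vhlAdj {s n1 n2 : ℕ} (n : ℕ) (Z : Matrix (Fin n1 × Fin s) (Fin n2) ℂ) :
    Matrix (Fin s) (Fin n) ℂ :=
  Matrix.of fun ℓ i => ∑ j : Fin n1, ∑ k : Fin n2, if j.1 + k.1 = i.1 then Z (j, ℓ) k else 0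

/-- The Hankel weight w_i = #{(j,k) : j + k = i, 0 ≤ j < n1, 0 ≤ k < n2}. -/
def wt (n1 n2 i : ℕ) : ℕ :=
  (Finset.univ.filter (fun p : Fin n1 × Fin n2 => p.1.1 + p.2.1 = i)).card

/-- The operator D⁻¹ : divide the i-th column by √w_i. -/
def Dinv (n1 n2 : ℕ) {s n : ℕ} (X : Matrix (Fin s) (Fin n) ℂ) : Matrix (Fin s) (Fin n) ℂ :=
  Matrix.of fun ℓ i => X ℓ i / (Real.sqrt (wt n1 n2 i.1) : ℂ)

/-- The operator D⁻² : divide the i-th column by w_i. -/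
def Dinv2 (n1 n2 : ℕ) {s n : ℕ} (X : Matrix (Fin s) (Fin n) ℂ) : Matrix (Fin s) (Fin n) ℂ :=
  Matrix.of fun ℓ i => X ℓ i / ((wt n1 n2 i.1 : ℝ) : ℂ)

/-- G = H ∘ D⁻¹. -/
def calG {s n n1 n2 : ℕ} (hn : n1 + n2 = n + 1) (X : Matrix (Fin s) (Fin n) ℂ) :
    Matrix (Fin n1 × Fin s) (Fin n2) ℂ :=
  vhl hn (Dinv n1 n2 X)

/-- G* = D⁻¹ ∘ H*. -/
def calGadj {s n n1 n2 : ℕ} (_hn : n1 + n2 = n + 1) (Z : Matrix (Fin n1 × Fin s) (Fin n2) ℂ) :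
    Matrix (Fin s) (Fin n) ℂ :=
  Dinv n1 n2 (vhlAdj n Z)

/-- H† = D⁻² ∘ H*, the Moore–Penrose pseudo-inverse of H. -/
def hdag {s n1 n2 : ℕ} (n : ℕ) (Z : Matrix (Fin n1 × Fin s) (Fin n2) ℂ) :
    Matrix (Fin s) (Fin n) ℂ :=
  Dinv2 n1 n2 (vhlAdj n Z)

/-- The measurement operator A(X)[j] = b_jᴴ X e_j. -/
def measA {s n : ℕ} (b : Fin n → Fin s → ℂ) (X : Matrix (Fin s) (Fin n) ℂ) : Fin n → ℂ :=
  fun j => ∑ ℓ, conj (b j ℓ) * X ℓ j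

/-- The adjoint measurement operator A*(y) = Σ_j y[j] b_j e_jᵀ. -/
def measAadj {s n : ℕ} (b : Fin n → Fin s → ℂ) (y : Fin n → ℂ) : Matrix (Fin s) (Fin n) ℂ :=
  Matrix.of fun ℓ j => y j * b j ℓ

/-- Orthogonal projection onto the tangent space determined by U and V. -/
def projT {m p : Type*} [Fintype m] [Fintype p] {r : ℕ}
    (U : Matrix m (Fin r) ℂ) (V : Matrix p (Fin r) ℂ) (W : Matrix m p ℂ) : Matrix m p ℂ :=
  U * Uᴴ * W + W * V * Vᴴ - U * Uᴴ * W * V * Vᴴ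

/-- Y is a best rank-r approximation (in Frobenius norm) of W. -/
def bestRankApprox {m p : Type*} [Fintype m] [Fintype p] (r : ℕ) (Y W : Matrix m p ℂ) : Prop :=
  Y.rank ≤ r ∧ ∀ Y' : Matrix m p ℂ, Y'.rank ≤ r → frob (W - Y) ≤ frob (W - Y')

/-- The vector a_τ = (1, e^{-2πiτ}, ..., e^{-2πiτ(n-1)})ᵀ. -/
def atau (n : ℕ) (τ : ℝ) : Fin n → ℂ :=
  fun i => Complex.exp (-2 * Real.pi * Complex.I * τ * i)

/-- The ground truth X♮ = Σ_k d_k h_k a_{τ_k}ᵀ. -/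
def groundTruth (s n r : ℕ) (d : Fin r → ℂ) (h : Fin r → Fin s → ℂ) (τ : Fin r → ℝ) :
    Matrix (Fin s) (Fin n) ℂ :=
  Matrix.of fun ℓ i => ∑ k, d k * h k ℓ * atau n (τ k) i

set_option linter.unusedSectionVars false
set_option linter.unusedVariables false
set_option maxHeartbeats 16000000

section Basics
variable {m p q : Type*} [Fintype m] [Fintype p] [Fintype q]

lemma frob_nonneg (X : Matrix m p ℂ) : 0 ≤ frob X := Real.sqrt_nonneg _
lemma l2_nonneg (v : m → ℂ) : 0 ≤ l2 v := Real.sqrt_nonneg _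

lemma frob_sq (X : Matrix m p ℂ) : frob X ^ 2 = ∑ i, ∑ j, ‖X i j‖ ^ 2 :=
  Real.sq_sqrt (by positivity)

lemma l2_sq (v : m → ℂ) : l2 v ^ 2 = ∑ i, ‖v i‖ ^ 2 :=
  Real.sq_sqrt (by positivity)

lemma frob_le_of_sq_le_sq {X : Matrix m p ℂ} {c : ℝ} (hc : 0 ≤ c)
    (h : frob X ^ 2 ≤ c ^ 2) : frob X ≤ c := by
  nlinarith [frob_nonneg X]

lemma l2_le_of_sq_le_sq {v : m → ℂ} {c : ℝ} (hc : 0 ≤ c)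
    (h : l2 v ^ 2 ≤ c ^ 2) : l2 v ≤ c := by
  nlinarith [l2_nonneg v]

/-- bridge to Euclidean space -/
def mvec (X : Matrix m p ℂ) : EuclideanSpace ℂ (m × p) :=
  (WithLp.equiv 2 _).symm (fun q : m × p => X q.1 q.2)

lemma frob_eq_norm_mvec (X : Matrix m p ℂ) : frob X = ‖mvec X‖ := by
  rw [EuclideanSpace.norm_eq, Fintype.sum_prod_type]
  rfl

lemma mvec_add (X Y : Matrix m p ℂ) : mvec (X + Y) = mvec X + mvec Y := rfl

lemma frob_add_le (X Y : Matrix m p ℂ) : frob (X + Y) ≤ frob X + frob Y := by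
  simp only [frob_eq_norm_mvec, mvec_add]; exact norm_add_le _ _

lemma frobInner_eq_inner (A B : Matrix m p ℂ) :
    frobInner A B = @inner ℂ _ _ (mvec A) (mvec B) := by
  rw [PiLp.inner_apply, Fintype.sum_prod_type]
  simp [frobInner, mvec, mul_comm]

lemma norm_frobInner_le (A B : Matrix m p ℂ) : ‖frobInner A B‖ ≤ frob A * frob B := by
  rw [frobInner_eq_inner, frob_eq_norm_mvec, frob_eq_norm_mvec]
  exact norm_inner_le_norm _ _

lemma re_frobInner_self (A : Matrix m p ℂ) : (frobInner A A).re = frob A ^ 2 := by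
  rw [frobInner_eq_inner, frob_eq_norm_mvec]
  exact_mod_cast @inner_self_eq_norm_sq ℂ _ _ _ _ (mvec A)

lemma frobInner_eq_trace (A B : Matrix m p ℂ) : frobInner A B = Matrix.trace (Aᴴ * B) := by
  rw [Matrix.trace, frobInner, Finset.sum_comm]
  simp [Matrix.mul_apply, Matrix.diag, Matrix.conjTranspose_apply]

lemma frob_sq_eq_re_trace (A : Matrix m p ℂ) : frob A ^ 2 = (Matrix.trace (Aᴴ * A)).re := by
  rw [← frobInner_eq_trace, re_frobInner_self]

lemma frob_conjTranspose (A : Matrix m p ℂ) : frob Aᴴ = frob A := by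
  rw [frob, frob, Finset.sum_comm]
  simp [Matrix.conjTranspose_apply]

lemma frob_transpose (A : Matrix m p ℂ) : frob Aᵀ = frob A := by
  rw [frob, frob, Finset.sum_comm]
  simp [Matrix.transpose_apply]

lemma frob_mul_le (A : Matrix m p ℂ) (B : Matrix p q ℂ) :
    frob (A * B) ≤ frob A * frob B := by
  apply frob_le_of_sq_le_sq (mul_nonneg (frob_nonneg _) (frob_nonneg _))
  rw [frob_sq, mul_pow, frob_sq, frob_sq]
  calc ∑ i, ∑ k, ‖(A * B) i k‖ ^ 2
      ≤ ∑ i, ∑ k, (∑ j, ‖A i j‖ ^ 2) * (∑ j, ‖B j k‖ ^ 2) := by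
        apply Finset.sum_le_sum; intro i _; apply Finset.sum_le_sum; intro k _
        rw [Matrix.mul_apply]
        calc ‖∑ j, A i j * B j k‖ ^ 2 ≤ (∑ j, ‖A i j‖ * ‖B j k‖) ^ 2 := by
              have := norm_sum_le Finset.univ (fun j => A i j * B j k)
              simp only [norm_mul] at this
              exact pow_le_pow_left₀ (norm_nonneg _) this 2
          _ ≤ (∑ j, ‖A i j‖ ^ 2) * (∑ j, ‖B j k‖ ^ 2) :=
              Finset.sum_mul_sq_le_sq_mul_sq _ _ _
    _ = (∑ i, ∑ j, ‖A i j‖ ^ 2) * (∑ j, ∑ k, ‖B j k‖ ^ 2) := by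
        have hB : ∑ j, ∑ k, ‖B j k‖ ^ 2 = ∑ k, ∑ j, ‖B j k‖ ^ 2 := Finset.sum_comm
        rw [hB, Finset.sum_mul_sum]

end Basics
section VecBridge
variable {m p : Type*} [Fintype m] [Fintype p]

def vvec (v : m → ℂ) : EuclideanSpace ℂ m := (WithLp.equiv 2 _).symm v

lemma l2_eq_norm (v : m → ℂ) : l2 v = ‖vvec v‖ := by
  rw [EuclideanSpace.norm_eq]; rfl

lemma l2_add_le (u v : m → ℂ) : l2 (u + v) ≤ l2 u + l2 v := by
  rw [l2_eq_norm, l2_eq_norm, l2_eq_norm]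
  exact norm_add_le (vvec u) (vvec v)

lemma l2_smul (c : ℂ) (v : m → ℂ) : l2 (c • v) = ‖c‖ * l2 v := by
  rw [l2_eq_norm, l2_eq_norm]
  exact norm_smul c (vvec v)

lemma l2_sq' (v : m → ℂ) : l2 v ^ 2 = ∑ i, ‖v i‖ ^ 2 := Real.sq_sqrt (by positivity)

lemma l2_nonneg' (v : m → ℂ) : 0 ≤ l2 v := Real.sqrt_nonneg _

lemma l2_pos_of_ne_zero {v : m → ℂ} (hv : v ≠ 0) : 0 < l2 v := by
  rw [l2_eq_norm]
  refine norm_pos_iff.mpr (fun h => hv ?_)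
  funext i
  exact congrFun (congrArg (WithLp.equiv 2 _) h) i

def colM (v : m → ℂ) : Matrix m (Fin 1) ℂ := Matrix.of fun i _ => v i

lemma l2_eq_frob_col (v : m → ℂ) : l2 v = frob (colM v) := by
  rw [l2, frob]
  congr 1
  simp [colM]

lemma mul_colM (A : Matrix m p ℂ) (v : p → ℂ) : A * colM v = colM (A.mulVec v) := by
  ext i j
  simp [colM, Matrix.mul_apply, Matrix.mulVec, dotProduct]

lemma l2_mulVec_eq_frob (A : Matrix m p ℂ) (v : p → ℂ) :
    l2 (A.mulVec v) = frob (A * colM v) := by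
  rw [mul_colM, l2_eq_frob_col]

end VecBridge

section MeasA
variable {s n : ℕ}

lemma measA_add (b : Fin n → Fin s → ℂ) (X Y : Matrix (Fin s) (Fin n) ℂ) :
    measA b (X + Y) = measA b X + measA b Y := by
  funext j
  simp [measA, mul_add, Finset.sum_add_distrib]

lemma l2_measA_sq_le {b : Fin n → Fin s → ℂ} {μ0 : ℝ} (hμ : 0 ≤ μ0)
    (hb : ∀ (j : Fin n) (ℓ : Fin s), ‖b j ℓ‖ ^ 2 ≤ μ0)
    (X : Matrix (Fin s) (Fin n) ℂ) :
    l2 (measA b X) ^ 2 ≤ (μ0 * s) * frob X ^ 2 := by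
  rw [l2_sq', frob_sq]
  have key : ∀ j, ‖measA b X j‖ ^ 2 ≤ (μ0 * s) * ∑ ℓ, ‖X ℓ j‖ ^ 2 := by
    intro j
    have h1 : ‖measA b X j‖ ≤ ∑ ℓ, ‖b j ℓ‖ * ‖X ℓ j‖ := by
      calc ‖measA b X j‖ ≤ ∑ ℓ, ‖conj (b j ℓ) * X ℓ j‖ := norm_sum_le _ _
        _ = ∑ ℓ, ‖b j ℓ‖ * ‖X ℓ j‖ := by simp [norm_mul]
    have h2 : (∑ ℓ, ‖b j ℓ‖ * ‖X ℓ j‖) ^ 2 ≤ (∑ ℓ, ‖b j ℓ‖ ^ 2) * (∑ ℓ, ‖X ℓ j‖ ^ 2) :=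
      Finset.sum_mul_sq_le_sq_mul_sq _ _ _
    have h3 : (∑ ℓ : Fin s, ‖b j ℓ‖ ^ 2) ≤ μ0 * s := by
      calc ∑ ℓ : Fin s, ‖b j ℓ‖ ^ 2 ≤ ∑ _ℓ : Fin s, μ0 :=
            Finset.sum_le_sum (fun ℓ _ => hb j ℓ)
        _ = μ0 * s := by simp [Finset.sum_const, mul_comm]
    calc ‖measA b X j‖ ^ 2 ≤ (∑ ℓ, ‖b j ℓ‖ * ‖X ℓ j‖) ^ 2 :=
          pow_le_pow_left₀ (norm_nonneg _) h1 2
      _ ≤ (∑ ℓ, ‖b j ℓ‖ ^ 2) * (∑ ℓ, ‖X ℓ j‖ ^ 2) := h2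
      _ ≤ (μ0 * s) * (∑ ℓ, ‖X ℓ j‖ ^ 2) :=
          mul_le_mul_of_nonneg_right h3 (by positivity)
  calc ∑ j, ‖measA b X j‖ ^ 2 ≤ ∑ j, (μ0 * s) * ∑ ℓ, ‖X ℓ j‖ ^ 2 :=
        Finset.sum_le_sum (fun j _ => key j)
    _ = (μ0 * s) * ∑ ℓ, ∑ j, ‖X ℓ j‖ ^ 2 := by
        rw [← Finset.mul_sum, Finset.sum_comm]

lemma re_frobInner_measAadj (b : Fin n → Fin s → ℂ) (X : Matrix (Fin s) (Fin n) ℂ) :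
    (frobInner X (measAadj b (measA b X))).re = l2 (measA b X) ^ 2 := by
  have h1 : frobInner X (measAadj b (measA b X))
      = ∑ j, measA b X j * conj (measA b X j) := by
    rw [frobInner, Finset.sum_comm]
    refine Finset.sum_congr rfl (fun j _ => ?_)
    simp only [measAadj, Matrix.of_apply]
    rw [show conj (measA b X j) = ∑ ℓ, b j ℓ * conj (X ℓ j) by
      rw [measA, map_sum]
      refine Finset.sum_congr rfl (fun ℓ _ => ?_)
      simp only [_root_.map_mul, Complex.conj_conj]]
    rw [Finset.mul_sum]
    refine Finset.sum_congr rfl (fun ℓ _ => ?_)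
    ring
  rw [h1, l2_sq', Complex.re_sum]
  refine Finset.sum_congr rfl (fun j _ => ?_)
  rw [Complex.mul_conj]
  simp [Complex.normSq_eq_norm_sq]
  norm_cast

end MeasA
section Proj
variable {m p q : Type*} [Fintype m] [Fintype p] [Fintype q]

lemma iso_cancel {r : ℕ} {U : Matrix m (Fin r) ℂ} (hU : Uᴴ * U = 1)
    {q' : Type*} (X : Matrix (Fin r) q' ℂ) : Uᴴ * (U * X) = X := by
  rw [← Matrix.mul_assoc, hU, Matrix.one_mul]

lemma frob_eq_of_sq_eq {X : Matrix m p ℂ} {Y : Matrix q p ℂ}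
    (h : frob X ^ 2 = frob Y ^ 2) : frob X = frob Y := by
  have h1 : frob X = Real.sqrt (frob X ^ 2) := (Real.sqrt_sq (frob_nonneg X)).symm
  rw [h1, h, Real.sqrt_sq (frob_nonneg Y)]

private lemma trace_key {P : Matrix m m ℂ} (hP : P * P = P) (hPH : Pᴴ = P)
    (M : Matrix m p ℂ) : frob (P * M) ^ 2 = (Matrix.trace (Mᴴ * (P * M))).re := by
  rw [frob_sq_eq_re_trace]
  congr 2
  rw [Matrix.conjTranspose_mul, hPH, Matrix.mul_assoc, ← Matrix.mul_assoc P, hP]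

lemma frob_projL_le [DecidableEq m] {P : Matrix m m ℂ} (hP : P * P = P) (hPH : Pᴴ = P)
    (M : Matrix m p ℂ) : frob (P * M) ≤ frob M := by
  have h1 := trace_key hP hPH M
  have hQ : (1 - P) * (1 - P) = 1 - P := by
    rw [Matrix.sub_mul, Matrix.mul_sub, Matrix.mul_sub, hP]
    simp
  have hQH : (1 - P)ᴴ = 1 - P := by simp [hPH]
  have h2 := trace_key hQ hQH M
  have hsum : frob (P * M) ^ 2 + frob ((1 - P) * M) ^ 2 = frob M ^ 2 := by
    rw [h1, h2, frob_sq_eq_re_trace, ← Complex.add_re, ← Matrix.trace_add, ← Matrix.mul_add]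
    congr 3
    rw [← Matrix.add_mul]
    simp
  apply frob_le_of_sq_le_sq (frob_nonneg M)
  nlinarith [sq_nonneg (frob ((1 - P) * M))]

lemma frob_projR_le [DecidableEq p] {P : Matrix p p ℂ} (hP : P * P = P) (hPH : Pᴴ = P)
    (M : Matrix m p ℂ) : frob (M * P) ≤ frob M := by
  have : frob (M * P) = frob ((M * P)ᴴ) := (frob_conjTranspose _).symm
  rw [this, Matrix.conjTranspose_mul, hPH]
  calc frob (P * Mᴴ) ≤ frob Mᴴ := frob_projL_le hP hPH Mᴴ
    _ = frob M := frob_conjTranspose M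

variable {r : ℕ}

lemma isoProj {U : Matrix m (Fin r) ℂ} (hU : Uᴴ * U = 1) :
    (U * Uᴴ) * (U * Uᴴ) = U * Uᴴ := by
  rw [Matrix.mul_assoc, ← Matrix.mul_assoc Uᴴ, hU, Matrix.one_mul]

lemma isoProjH (U : Matrix m (Fin r) ℂ) : (U * Uᴴ)ᴴ = U * Uᴴ := by
  rw [Matrix.conjTranspose_mul, Matrix.conjTranspose_conjTranspose]

lemma frob_iso_mul {U : Matrix m (Fin r) ℂ} (hU : Uᴴ * U = 1)
    (M : Matrix (Fin r) p ℂ) : frob (U * M) = frob M := by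
  apply frob_eq_of_sq_eq
  rw [frob_sq_eq_re_trace, frob_sq_eq_re_trace]
  congr 2
  rw [Matrix.conjTranspose_mul, Matrix.mul_assoc, ← Matrix.mul_assoc Uᴴ, hU, Matrix.one_mul]

lemma frob_isoH_mul_le [DecidableEq m] {U : Matrix m (Fin r) ℂ} (hU : Uᴴ * U = 1)
    (M : Matrix m p ℂ) : frob (Uᴴ * M) ≤ frob M := by
  have h : frob (Uᴴ * M) = frob ((U * Uᴴ) * M) := by
    apply frob_eq_of_sq_eq
    rw [frob_sq_eq_re_trace, trace_key (isoProj hU) (isoProjH U)]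
    congr 2
    rw [Matrix.conjTranspose_mul, Matrix.conjTranspose_conjTranspose, Matrix.mul_assoc,
      Matrix.mul_assoc]
  rw [h]
  exact frob_projL_le (isoProj hU) (isoProjH U) M

lemma frob_mul_isoH {V : Matrix p (Fin r) ℂ} (hV : Vᴴ * V = 1)
    (M : Matrix m (Fin r) ℂ) : frob (M * Vᴴ) = frob M := by
  rw [← frob_conjTranspose (M * Vᴴ), Matrix.conjTranspose_mul,
    Matrix.conjTranspose_conjTranspose, frob_iso_mul hV, frob_conjTranspose]

lemma frob_mul_iso_le [DecidableEq p] {V : Matrix p (Fin r) ℂ} (hV : Vᴴ * V = 1)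
    (M : Matrix m p ℂ) : frob (M * V) ≤ frob M := by
  rw [← frob_conjTranspose (M * V), Matrix.conjTranspose_mul]
  calc frob (Vᴴ * Mᴴ) ≤ frob Mᴴ := frob_isoH_mul_le hV Mᴴ
    _ = frob M := frob_conjTranspose M

-- bilinearity of frobInner
lemma frobInner_add_right (A B C : Matrix m p ℂ) :
    frobInner A (B + C) = frobInner A B + frobInner A C := by
  simp [frobInner, mul_add, Finset.sum_add_distrib]

lemma frobInner_sub_right (A B C : Matrix m p ℂ) :
    frobInner A (B - C) = frobInner A B - frobInner A C := by
  simp [frobInner, mul_sub, Finset.sum_sub_distrib]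

lemma frobInner_add_left (A B C : Matrix m p ℂ) :
    frobInner (A + B) C = frobInner A C + frobInner B C := by
  simp [frobInner, add_mul, Finset.sum_add_distrib]

lemma frobInner_sub_left (A B C : Matrix m p ℂ) :
    frobInner (A - B) C = frobInner A C - frobInner B C := by
  simp [frobInner, sub_mul, Finset.sum_sub_distrib]

lemma frobInner_muL_left (P : Matrix m m ℂ) (hPH : Pᴴ = P) (A B : Matrix m p ℂ) :
    frobInner (P * A) B = frobInner A (P * B) := by
  rw [frobInner_eq_trace, frobInner_eq_trace, Matrix.conjTranspose_mul, hPH,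
    Matrix.mul_assoc]

lemma frobInner_muR_left (P : Matrix p p ℂ) (hPH : Pᴴ = P) (A B : Matrix m p ℂ) :
    frobInner (A * P) B = frobInner A (B * P) := by
  rw [frobInner_eq_trace, frobInner_eq_trace, Matrix.conjTranspose_mul, hPH,
    Matrix.mul_assoc, Matrix.trace_mul_comm, Matrix.mul_assoc]

lemma projT_eq {U : Matrix m (Fin r) ℂ} {V : Matrix p (Fin r) ℂ} (W : Matrix m p ℂ) :
    projT U V W = (U * Uᴴ) * W + W * (V * Vᴴ) - (U * Uᴴ) * (W * (V * Vᴴ)) := by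
  simp only [projT, Matrix.mul_assoc]

lemma frobInner_projT_comm {U : Matrix m (Fin r) ℂ} {V : Matrix p (Fin r) ℂ}
    (A B : Matrix m p ℂ) :
    frobInner (projT U V A) B = frobInner A (projT U V B) := by
  rw [projT_eq A, projT_eq B, frobInner_sub_left, frobInner_add_left,
    frobInner_sub_right, frobInner_add_right,
    frobInner_muL_left (U * Uᴴ) (isoProjH U) A B,
    frobInner_muR_left (V * Vᴴ) (isoProjH V) A B,
    frobInner_muL_left (U * Uᴴ) (isoProjH U) (A * (V * Vᴴ)) B,
    frobInner_muR_left (V * Vᴴ) (isoProjH V) A ((U * Uᴴ) * B)]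
  simp only [Matrix.mul_assoc]

lemma projT_projT {U : Matrix m (Fin r) ℂ} {V : Matrix p (Fin r) ℂ}
    (hU : Uᴴ * U = 1) (hV : Vᴴ * V = 1) (W : Matrix m p ℂ) :
    projT U V (projT U V W) = projT U V W := by
  simp only [projT, Matrix.mul_add, Matrix.add_mul, Matrix.mul_sub, Matrix.sub_mul,
    Matrix.mul_assoc, iso_cancel hU, iso_cancel hV]
  abel

lemma frob_projT_le {U : Matrix m (Fin r) ℂ} {V : Matrix p (Fin r) ℂ}
    (hU : Uᴴ * U = 1) (hV : Vᴴ * V = 1) (W : Matrix m p ℂ) :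
    frob (projT U V W) ≤ frob W := by
  have e1 : frobInner (projT U V W) (projT U V W)
      = frobInner W (projT U V (projT U V W)) := frobInner_projT_comm _ _
  have h1 : frob (projT U V W) ^ 2 = (frobInner W (projT U V W)).re := by
    rw [← re_frobInner_self, e1, projT_projT hU hV]
  have h2 : (frobInner W (projT U V W)).re ≤ frob W * frob (projT U V W) := by
    calc (frobInner W (projT U V W)).re ≤ ‖frobInner W (projT U V W)‖ := by
          exact Complex.re_le_norm _
      _ ≤ frob W * frob (projT U V W) := norm_frobInner_le _ _
  rcases eq_or_lt_of_le (frob_nonneg (projT U V W)) with h | h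
  · rw [← h]; exact frob_nonneg W
  · have h3 : frob (projT U V W) * frob (projT U V W)
        ≤ frob W * frob (projT U V W) := by nlinarith
    exact le_of_mul_le_mul_right h3 h
  
end Proj
section Hankel
variable {s n n1 n2 : ℕ}

lemma wt_pos (hn : n1 + n2 = n + 1) (h1 : 0 < n1) (h2 : 0 < n2) (i : Fin n) :
    0 < wt n1 n2 i.1 := by
  have hi := i.2
  rw [wt, Finset.card_pos]
  refine ⟨(⟨min i.1 (n1 - 1), by omega⟩, ⟨i.1 - min i.1 (n1 - 1), by omega⟩), ?_⟩
  simp only [Finset.mem_filter, Finset.mem_univ, true_and]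
  omega

lemma sum_fin_collapse {M : Type*} [AddCommMonoid M] {n : ℕ} {c : ℕ} (hc : c < n)
    (f : Fin n → M) :
    ∑ i : Fin n, (if c = i.1 then f i else 0) = f ⟨c, hc⟩ := by
  rw [Finset.sum_eq_single (⟨c, hc⟩ : Fin n)]
  · simp
  · intro i _ hne
    have hne' : c ≠ i.1 := fun h => hne (Fin.ext h.symm)
    simp [hne']
  · simp

lemma calGadj_add (hn : n1 + n2 = n + 1) (A B : Matrix (Fin n1 × Fin s) (Fin n2) ℂ) :
    calGadj hn (A + B) = calGadj hn A + calGadj hn B := by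
  ext ℓ i
  simp only [calGadj, Dinv, vhlAdj, Matrix.of_apply, Matrix.add_apply, ← add_div]
  congr 1
  rw [← Finset.sum_add_distrib]
  refine Finset.sum_congr rfl fun j _ => ?_
  rw [← Finset.sum_add_distrib]
  refine Finset.sum_congr rfl fun k _ => ?_
  split <;> simp

lemma frobInner_calGadj (hn : n1 + n2 = n + 1)
    (Z : Matrix (Fin n1 × Fin s) (Fin n2) ℂ) (X : Matrix (Fin s) (Fin n) ℂ) :
    frobInner (calGadj hn Z) X = frobInner Z (calG hn X) := by
  have hlt : ∀ (j : Fin n1) (k : Fin n2), j.1 + k.1 < n := fun j k => by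
    have := j.2; have := k.2; omega
  have hR : frobInner Z (calG hn X)
      = ∑ j : Fin n1, ∑ ℓ : Fin s, ∑ k : Fin n2,
          conj (Z (j, ℓ) k) * (X ℓ ⟨j.1 + k.1, hlt j k⟩
            / (Real.sqrt (wt n1 n2 (j.1 + k.1)) : ℂ)) := by
    rw [frobInner, Fintype.sum_prod_type]
    rfl
  have hL : frobInner (calGadj hn Z) X
      = ∑ ℓ : Fin s, ∑ i : Fin n, ∑ j : Fin n1, ∑ k : Fin n2,
          (if j.1 + k.1 = i.1 then
            conj (Z (j, ℓ) k) * (X ℓ i / (Real.sqrt (wt n1 n2 i.1) : ℂ)) else 0) := by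
    rw [frobInner]
    refine Finset.sum_congr rfl (fun ℓ _ => Finset.sum_congr rfl (fun i _ => ?_))
    simp only [calGadj, Dinv, vhlAdj, Matrix.of_apply, map_div₀, map_sum,
      apply_ite conj, map_zero, Complex.conj_ofReal, Finset.sum_div, Finset.sum_mul,
      ite_div, zero_div, ite_mul, zero_mul]
    refine Finset.sum_congr rfl (fun j _ => Finset.sum_congr rfl (fun k _ => ?_))
    split
    · ring
    · rfl
  rw [hL, hR]
  have swap1 : ∀ ℓ : Fin s, (∑ i : Fin n, ∑ j : Fin n1, ∑ k : Fin n2,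
      (if j.1 + k.1 = i.1 then
        conj (Z (j, ℓ) k) * (X ℓ i / (Real.sqrt (wt n1 n2 i.1) : ℂ)) else 0))
      = ∑ j : Fin n1, ∑ k : Fin n2,
          conj (Z (j, ℓ) k) * (X ℓ ⟨j.1 + k.1, hlt j k⟩
            / (Real.sqrt (wt n1 n2 (j.1 + k.1)) : ℂ)) := by
    intro ℓ
    rw [Finset.sum_comm]
    refine Finset.sum_congr rfl (fun j _ => ?_)
    rw [Finset.sum_comm]
    refine Finset.sum_congr rfl (fun k _ => ?_)
    exact sum_fin_collapse (hlt j k) _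
  simp only [swap1]
  exact Finset.sum_comm

lemma frob_calGadj_le (hn : n1 + n2 = n + 1) (h1 : 0 < n1) (h2 : 0 < n2)
    (Z : Matrix (Fin n1 × Fin s) (Fin n2) ℂ) : frob (calGadj hn Z) ≤ frob Z := by
  apply frob_le_of_sq_le_sq (frob_nonneg Z)
  rw [frob_sq, frob_sq]
  have key : ∀ (ℓ : Fin s) (i : Fin n),
      ‖calGadj hn Z ℓ i‖ ^ 2 ≤
        ∑ p : Fin n1 × Fin n2, (if p.1.1 + p.2.1 = i.1 then ‖Z (p.1, ℓ) p.2‖ ^ 2 else 0) := by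
    intro ℓ i
    have hw := wt_pos hn h1 h2 i
    have hwR : (0:ℝ) < (wt n1 n2 i.1 : ℝ) := by exact_mod_cast hw
    have hnorm : ‖calGadj hn Z ℓ i‖
        = ‖∑ p : Fin n1 × Fin n2, (if p.1.1 + p.2.1 = i.1 then Z (p.1, ℓ) p.2 else 0)‖
          / Real.sqrt (wt n1 n2 i.1) := by
      simp only [calGadj, Dinv, vhlAdj, Matrix.of_apply]
      rw [norm_div, Fintype.sum_prod_type]
      congr 1
      simp [abs_of_nonneg (Real.sqrt_nonneg _)]
    rw [hnorm, div_pow, Real.sq_sqrt (le_of_lt hwR)]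
    rw [div_le_iff₀ hwR]
    have hb : ‖∑ p : Fin n1 × Fin n2, (if p.1.1 + p.2.1 = i.1 then Z (p.1, ℓ) p.2 else 0)‖
        ≤ ∑ p : Fin n1 × Fin n2, (if p.1.1 + p.2.1 = i.1 then ‖Z (p.1, ℓ) p.2‖ else 0) := by
      refine (norm_sum_le _ _).trans_eq ?_
      refine Finset.sum_congr rfl (fun p _ => ?_)
      split <;> simp
    calc ‖∑ p : Fin n1 × Fin n2, (if p.1.1 + p.2.1 = i.1 then Z (p.1, ℓ) p.2 else 0)‖ ^ 2
        ≤ (∑ p : Fin n1 × Fin n2, (if p.1.1 + p.2.1 = i.1 then ‖Z (p.1, ℓ) p.2‖ else 0)) ^ 2 :=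
          pow_le_pow_left₀ (norm_nonneg _) hb 2
      _ = (∑ p ∈ Finset.univ.filter (fun p : Fin n1 × Fin n2 => p.1.1 + p.2.1 = i.1),
            ‖Z (p.1, ℓ) p.2‖) ^ 2 := by rw [Finset.sum_filter]
      _ ≤ (wt n1 n2 i.1 : ℝ) *
            ∑ p ∈ Finset.univ.filter (fun p : Fin n1 × Fin n2 => p.1.1 + p.2.1 = i.1),
              ‖Z (p.1, ℓ) p.2‖ ^ 2 := by
          have := sq_sum_le_card_mul_sum_sq
            (s := Finset.univ.filter (fun p : Fin n1 × Fin n2 => p.1.1 + p.2.1 = i.1))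
            (f := fun p => ‖Z (p.1, ℓ) p.2‖)
          simpa [wt] using this
      _ = (∑ p : Fin n1 × Fin n2, (if p.1.1 + p.2.1 = i.1 then ‖Z (p.1, ℓ) p.2‖ ^ 2 else 0))
            * (wt n1 n2 i.1 : ℝ) := by rw [Finset.sum_filter, mul_comm]
  calc ∑ ℓ : Fin s, ∑ i : Fin n, ‖calGadj hn Z ℓ i‖ ^ 2
      ≤ ∑ ℓ : Fin s, ∑ i : Fin n, ∑ p : Fin n1 × Fin n2,
          (if p.1.1 + p.2.1 = i.1 then ‖Z (p.1, ℓ) p.2‖ ^ 2 else 0) :=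
        Finset.sum_le_sum (fun ℓ _ => Finset.sum_le_sum (fun i _ => key ℓ i))
    _ = ∑ ℓ : Fin s, ∑ p : Fin n1 × Fin n2, ‖Z (p.1, ℓ) p.2‖ ^ 2 := by
        refine Finset.sum_congr rfl (fun ℓ _ => ?_)
        rw [Finset.sum_comm]
        refine Finset.sum_congr rfl (fun p _ => ?_)
        exact sum_fin_collapse (by have := p.1.2; have := p.2.2; omega) _
    _ = ∑ q : Fin n1 × Fin s, ∑ k : Fin n2, ‖Z q k‖ ^ 2 := by
        simp only [Fintype.sum_prod_type]
        exact Finset.sum_comm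
  
end Hankel
section Spec
variable {m p : Type*} [Fintype m] [Fintype p]

lemma l2_zero : l2 (0 : m → ℂ) = 0 := by simp [l2]

lemma l2_mulVec_le_frob (Z : Matrix m p ℂ) {v : p → ℂ} (hv : (∑ j, ‖v j‖ ^ 2) ≤ 1) :
    l2 (Z.mulVec v) ≤ frob Z := by
  rw [l2_mulVec_eq_frob]
  calc frob (Z * colM v) ≤ frob Z * frob (colM v) := frob_mul_le _ _
    _ ≤ frob Z * 1 := by
        apply mul_le_mul_of_nonneg_left ?_ (frob_nonneg Z)
        rw [← l2_eq_frob_col, l2]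
        exact Real.sqrt_le_one.mpr hv
    _ = frob Z := mul_one _

lemma specSet_nonempty (Z : Matrix m p ℂ) :
    {t | ∃ v : p → ℂ, (∑ j, ‖v j‖ ^ 2) ≤ 1 ∧ t = l2 (Z.mulVec v)}.Nonempty :=
  ⟨l2 (Z.mulVec 0), 0, by simp, rfl⟩

lemma specSet_bddAbove (Z : Matrix m p ℂ) :
    BddAbove {t | ∃ v : p → ℂ, (∑ j, ‖v j‖ ^ 2) ≤ 1 ∧ t = l2 (Z.mulVec v)} := by
  refine ⟨frob Z, ?_⟩
  rintro t ⟨v, hv, rfl⟩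
  exact l2_mulVec_le_frob Z hv

lemma le_specNorm (Z : Matrix m p ℂ) {v : p → ℂ} (hv : (∑ j, ‖v j‖ ^ 2) ≤ 1) :
    l2 (Z.mulVec v) ≤ specNorm Z :=
  le_csSup (specSet_bddAbove Z) ⟨v, hv, rfl⟩

lemma specNorm_le {Z : Matrix m p ℂ} {c : ℝ}
    (h : ∀ v : p → ℂ, (∑ j, ‖v j‖ ^ 2) ≤ 1 → l2 (Z.mulVec v) ≤ c) : specNorm Z ≤ c := by
  apply csSup_le (specSet_nonempty Z)
  rintro t ⟨v, hv, rfl⟩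
  exact h v hv

lemma specNorm_nonneg (Z : Matrix m p ℂ) : 0 ≤ specNorm Z := by
  have h0 : l2 (Z.mulVec 0) = 0 := by simp [l2_zero]
  calc (0:ℝ) = l2 (Z.mulVec 0) := h0.symm
    _ ≤ specNorm Z := le_specNorm Z (by simp)

lemma specNorm_le_frob (Z : Matrix m p ℂ) : specNorm Z ≤ frob Z :=
  specNorm_le (fun v hv => l2_mulVec_le_frob Z hv)

lemma sval_le {Z : Matrix m p ℂ} {k : ℕ} {Y : Matrix m p ℂ} (hY : Y.rank < k) :
    sval Z k ≤ specNorm (Z - Y) := by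
  apply csInf_le
  · refine ⟨0, ?_⟩
    rintro t ⟨Y', _, rfl⟩
    exact specNorm_nonneg _
  · exact ⟨Y, hY, rfl⟩

lemma le_sval {Z : Matrix m p ℂ} {k : ℕ} {c : ℝ} (hk : 0 < k)
    (h : ∀ Y : Matrix m p ℂ, Y.rank < k → c ≤ specNorm (Z - Y)) : c ≤ sval Z k := by
  apply le_csInf
  · exact ⟨specNorm (Z - 0), 0, by simpa [Matrix.rank_zero] using hk, rfl⟩
  · rintro t ⟨Y, hY, rfl⟩
    exact h Y hY

end Spec

section CompactMin

lemma exists_min_sphere {r : ℕ} (hr : 0 < r) (M : Matrix (Fin r) (Fin r) ℂ) :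
    ∃ u₀ : Fin r → ℂ, (∑ i, ‖u₀ i‖ ^ 2) = 1 ∧
      ∀ u : Fin r → ℂ, l2 (M.mulVec u₀) * l2 u ≤ l2 (M.mulVec u) := by
  classical
  let E := EuclideanSpace ℂ (Fin r)
  let L : E →ₗ[ℂ] E :=
    { toFun := fun u => vvec (M.mulVec ((WithLp.equiv 2 _) u))
      map_add' := by
        intro x y
        rw [WithLp.equiv_apply, WithLp.ofLp_add, Matrix.mulVec_add, vvec, WithLp.equiv_symm_apply, WithLp.toLp_add]
        rfl
      map_smul' := by
        intro c x
        rw [WithLp.equiv_apply, WithLp.ofLp_smul, Matrix.mulVec_smul, vvec, WithLp.equiv_symm_apply, WithLp.toLp_smul,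
          RingHom.id_apply]
        rfl }
  have hcont : Continuous fun u : E => ‖L u‖ := L.continuous_of_finiteDimensional.norm
  have hsph : (Metric.sphere (0 : E) 1).Nonempty := by
    refine ⟨EuclideanSpace.single ⟨0, hr⟩ 1, ?_⟩
    rw [mem_sphere_zero_iff_norm, EuclideanSpace.norm_single]
    simp
  obtain ⟨u₀E, hmem, hmin⟩ := (isCompact_sphere (0 : E) 1).exists_isMinOn hsph
    hcont.continuousOn
  rw [mem_sphere_zero_iff_norm] at hmem
  set u₀ : Fin r → ℂ := (WithLp.equiv 2 _) u₀E with hu₀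
  have hL : ∀ u : Fin r → ℂ, ‖L (vvec u)‖ = l2 (M.mulVec u) := by
    intro u
    rw [l2_eq_norm]
    congr 1
  have hLe : ‖L u₀E‖ = l2 (M.mulVec u₀) := by
    rw [← hL u₀]
    congr 1
  have hnorm : l2 u₀ = 1 := by
    rw [l2_eq_norm]
    exact hmem
  refine ⟨u₀, ?_, ?_⟩
  · have := hnorm
    rw [l2] at this
    nlinarith [Finset.sum_nonneg (fun i (_ : i ∈ Finset.univ) => sq_nonneg ‖u₀ i‖),
      Real.sq_sqrt (Finset.sum_nonneg (fun i (_ : i ∈ Finset.univ) => sq_nonneg ‖u₀ i‖))]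
  · intro u
    rcases eq_or_ne u 0 with rfl | hu
    · simp [Matrix.mulVec_zero, l2_zero]
    · have hc : 0 < l2 u := l2_pos_of_ne_zero hu
      have hmem' : ((l2 u : ℂ)⁻¹ • vvec u) ∈ Metric.sphere (0 : E) 1 := by
        rw [mem_sphere_zero_iff_norm, norm_smul, ← l2_eq_norm]
        simp only [norm_inv, Complex.norm_real]
        rw [Real.norm_of_nonneg (l2_nonneg' u)]
        field_simp
      have h := hmin hmem'
      have h2 : ‖L ((l2 u : ℂ)⁻¹ • vvec u)‖ = (l2 u)⁻¹ * l2 (M.mulVec u) := by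
        rw [_root_.map_smul, norm_smul, hL]
        simp only [norm_inv, Complex.norm_real]
        rw [Real.norm_of_nonneg (l2_nonneg' u)]
      have h3 : l2 (M.mulVec u₀) ≤ (l2 u)⁻¹ * l2 (M.mulVec u) := by
        rw [← hLe, ← h2]
        exact h
      calc l2 (M.mulVec u₀) * l2 u ≤ ((l2 u)⁻¹ * l2 (M.mulVec u)) * l2 u :=
            mul_le_mul_of_nonneg_right h3 (l2_nonneg' u)
        _ = l2 (M.mulVec u) := by field_simp

end CompactMin

section Rank
variable {m' : Type*} [Fintype m']

lemma exists_kernel_vec {r : ℕ} {M : Matrix m' (Fin r) ℂ} (h : M.rank < r) :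
    ∃ u : Fin r → ℂ, u ≠ 0 ∧ M.mulVec u = 0 := by
  have hker : LinearMap.ker M.mulVecLin ≠ ⊥ := by
    intro hbot
    have := LinearMap.finrank_range_add_finrank_ker M.mulVecLin
    rw [hbot, finrank_bot] at this
    rw [Matrix.rank] at h
    simp only [add_zero] at this
    rw [this] at h
    simp [Module.finrank_pi] at h
  obtain ⟨u, hu, hune⟩ := Submodule.exists_mem_ne_zero_of_ne_bot hker
  exact ⟨u, hune, hu⟩

lemma rank_lt_of_kernel {r : ℕ} {M : Matrix m' (Fin r) ℂ} {u : Fin r → ℂ}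
    (hu : u ≠ 0) (hMu : M.mulVec u = 0) : M.rank < r := by
  have hker : LinearMap.ker M.mulVecLin ≠ ⊥ := by
    intro hbot
    have : u ∈ LinearMap.ker M.mulVecLin := by
      rw [LinearMap.mem_ker]
      exact hMu
    rw [hbot, Submodule.mem_bot] at this
    exact hu this
  have hpos : 0 < Module.finrank ℂ (LinearMap.ker M.mulVecLin) := by
    rw [Module.finrank_pos_iff]
    exact Submodule.nontrivial_iff_ne_bot.mpr hker
  have := LinearMap.finrank_range_add_finrank_ker M.mulVecLin
  rw [Matrix.rank]
  have hfr : Module.finrank ℂ (Fin r → ℂ) = r := by simp [Module.finrank_pi]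
  omega

end Rank
section Helpers
variable {m p q : Type*} [Fintype m] [Fintype p] [Fintype q]

lemma le_of_sq_le' {a b : ℝ} (ha : 0 ≤ a) (hb : 0 ≤ b) (h : a ^ 2 ≤ b ^ 2) : a ≤ b := by
  nlinarith

lemma l2_eq_zero_imp {v : m → ℂ} (h : l2 v = 0) : v = 0 := by
  by_contra hv
  exact absurd h (ne_of_gt (l2_pos_of_ne_zero hv))

lemma unit_ne_zero {v : m → ℂ} (hv : (∑ i, ‖v i‖ ^ 2) = 1) : v ≠ 0 := by
  intro h
  rw [h] at hv
  simp at hv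

lemma l2_of_unit {v : m → ℂ} (hv : (∑ i, ‖v i‖ ^ 2) = 1) : l2 v = 1 := by
  rw [l2, hv, Real.sqrt_one]

lemma l2_le_one {v : m → ℂ} (hv : (∑ i, ‖v i‖ ^ 2) ≤ 1) : l2 v ≤ 1 :=
  Real.sqrt_le_one.mpr hv

lemma norm_dot_le (a b : m → ℂ) : ‖∑ j, conj (a j) * b j‖ ≤ l2 a * l2 b := by
  rw [l2_eq_norm, l2_eq_norm]
  have h := norm_inner_le_norm (𝕜 := ℂ) (vvec a) (vvec b)
  have he : (inner ℂ (vvec a) (vvec b) : ℂ) = ∑ j, conj (a j) * b j := by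
    rw [PiLp.inner_apply]
    simp [vvec, mul_comm]
  rwa [he] at h

lemma l2_iso_mulVec {r : ℕ} {U : Matrix m (Fin r) ℂ} (hU : Uᴴ * U = 1) (x : Fin r → ℂ) :
    l2 (U.mulVec x) = l2 x := by
  rw [l2_mulVec_eq_frob, frob_iso_mul hU, ← l2_eq_frob_col]

lemma l2_isoH_mulVec_le [DecidableEq p] {r : ℕ} {V : Matrix p (Fin r) ℂ} (hV : Vᴴ * V = 1) (v : p → ℂ) :
    l2 (Vᴴ.mulVec v) ≤ l2 v := by
  rw [l2_mulVec_eq_frob, l2_eq_frob_col]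
  exact frob_isoH_mul_le hV (colM v)

/-- rank-one projector onto w -/
def Kmat (w : m → ℂ) : Matrix m m ℂ := Matrix.of fun i j => w i * conj (w j)

lemma Kmat_mulVec (w : m → ℂ) (y : m → ℂ) :
    (Kmat w).mulVec y = (∑ j, conj (w j) * y j) • w := by
  funext i
  simp only [Kmat, Matrix.mulVec, dotProduct, Matrix.of_apply, Pi.smul_apply, smul_eq_mul,
    Finset.sum_mul, Finset.mul_sum]
  refine Finset.sum_congr rfl (fun j _ => ?_)
  ring

lemma Kmat_conjTranspose (w : m → ℂ) : (Kmat w)ᴴ = Kmat w := by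
  ext i j
  simp [Kmat, Matrix.conjTranspose_apply, mul_comm]

lemma Kmat_fix {w : m → ℂ} [DecidableEq m] (hw : (∑ i, ‖w i‖ ^ 2) = 1) :
    (1 - Kmat w).mulVec w = 0 := by
  rw [Matrix.sub_mulVec, Matrix.one_mulVec, Kmat_mulVec]
  have key : ∀ j : m, conj (w j) * w j = ((‖w j‖ ^ 2 : ℝ) : ℂ) := by
    intro j
    rw [mul_comm, Complex.mul_conj]
    norm_cast
    rw [Complex.normSq_eq_norm_sq]
  have hsum : (∑ j, conj (w j) * w j) = 1 := by
    calc (∑ j, conj (w j) * w j) = ∑ j, ((‖w j‖ ^ 2 : ℝ) : ℂ) :=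
          Finset.sum_congr rfl (fun j _ => key j)
      _ = ((∑ j, ‖w j‖ ^ 2 : ℝ) : ℂ) := by push_cast; ring
      _ = 1 := by rw [hw]; norm_num
  rw [hsum, one_smul, sub_self]

lemma dot_conjTranspose {r : ℕ} (St : Matrix (Fin r) (Fin r) ℂ) (w y : Fin r → ℂ) :
    ∑ j, conj (w j) * (St.mulVec y) j = ∑ k, conj ((Stᴴ.mulVec w) k) * y k := by
  simp only [Matrix.mulVec, dotProduct, Matrix.conjTranspose_apply, Finset.mul_sum, map_sum,
    _root_.map_mul, Complex.conj_conj, Finset.sum_mul]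
  rw [Finset.sum_comm]
  refine Finset.sum_congr rfl fun k _ => Finset.sum_congr rfl fun j _ => ?_
  simp only [RCLike.star_def, Complex.conj_conj]
  ring

lemma sigma_frob {r : ℕ} {σ : ℝ} {M : Matrix (Fin r) (Fin r) ℂ}
    (hσ : 0 ≤ σ) (h : ∀ u, σ * l2 u ≤ l2 (M.mulVec u)) (Y : Matrix q (Fin r) ℂ) :
    σ * frob Y ≤ frob (Y * Mᵀ) := by
  apply le_of_sq_le' (mul_nonneg hσ (frob_nonneg Y)) (frob_nonneg _)
  rw [mul_pow, ← frob_transpose (Y * Mᵀ)]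
  have htr : (Y * Mᵀ)ᵀ = M * Yᵀ := by
    rw [Matrix.transpose_mul, Matrix.transpose_transpose]
  rw [htr, frob_sq, frob_sq]
  conv_rhs => rw [Finset.sum_comm]
  have hcol : ∀ c : q, (∑ i, ‖(M * Yᵀ) i c‖ ^ 2) = l2 (M.mulVec (fun k => Y c k)) ^ 2 := by
    intro c
    rw [l2_sq']
    refine Finset.sum_congr rfl fun i _ => ?_
    have he : (M * Yᵀ) i c = (M.mulVec fun k => Y c k) i := by
      simp [Matrix.mul_apply, Matrix.mulVec, dotProduct, Matrix.transpose_apply]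
    rw [he]
  calc σ ^ 2 * ∑ i, ∑ j, ‖Y i j‖ ^ 2 = ∑ c, σ ^ 2 * (l2 (fun k => Y c k)) ^ 2 := by
        rw [Finset.mul_sum]
        refine Finset.sum_congr rfl fun c _ => ?_
        rw [l2_sq']
    _ ≤ ∑ c, l2 (M.mulVec (fun k => Y c k)) ^ 2 := by
        refine Finset.sum_le_sum fun c _ => ?_
        rw [← mul_pow]
        exact pow_le_pow_left₀ (mul_nonneg hσ (l2_nonneg' _)) (h _) 2
    _ = ∑ c, ∑ i, ‖(M * Yᵀ) i c‖ ^ 2 := by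
        refine Finset.sum_congr rfl fun c _ => (hcol c).symm

end Helpers

section SvalComp
variable {m p : Type*} [Fintype m] [Fintype p]

lemma sval_le_right [DecidableEq m] [DecidableEq p] {r : ℕ} (hr : 0 < r) {Ut : Matrix m (Fin r) ℂ} {Vt : Matrix p (Fin r) ℂ}
    (St : Matrix (Fin r) (Fin r) ℂ) (hUt : Utᴴ * Ut = 1) (hVt : Vtᴴ * Vt = 1)
    {w : Fin r → ℂ} (hw : (∑ i, ‖w i‖ ^ 2) = 1) (Z' : Matrix m p ℂ) :
    sval Z' r ≤ l2 (St.mulVec w) + frob (Z' - Ut * St * Vtᴴ) := by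
  set K : Matrix (Fin r) (Fin r) ℂ := Kmat w with hKdef
  have hwne : w ≠ 0 := unit_ne_zero hw
  have hker : (St * (1 - K)).mulVec w = 0 := by
    rw [← Matrix.mulVec_mulVec, Kmat_fix hw, Matrix.mulVec_zero]
  have hrank : (Ut * (St * (1 - K)) * Vtᴴ).rank < r :=
    calc (Ut * (St * (1 - K)) * Vtᴴ).rank ≤ (Ut * (St * (1 - K))).rank :=
        Matrix.rank_mul_le_left _ _
      _ ≤ (St * (1 - K)).rank := Matrix.rank_mul_le_right _ _
      _ < r := rank_lt_of_kernel hwne hker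
  refine le_trans (sval_le hrank) ?_
  have hZtY : Z' - Ut * (St * (1 - K)) * Vtᴴ = (Z' - Ut * St * Vtᴴ) + Ut * (St * K) * Vtᴴ := by
    rw [Matrix.mul_sub St, Matrix.mul_one, Matrix.mul_sub Ut, Matrix.sub_mul]
    abel
  rw [hZtY]
  apply specNorm_le
  intro v hv
  rw [Matrix.add_mulVec]
  refine le_trans (l2_add_le _ _) ?_
  have h1 : l2 ((Z' - Ut * St * Vtᴴ).mulVec v) ≤ frob (Z' - Ut * St * Vtᴴ) :=
    l2_mulVec_le_frob _ hv
  have h2 : l2 ((Ut * (St * K) * Vtᴴ).mulVec v) ≤ l2 (St.mulVec w) := by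
    have e1 : (Ut * (St * K) * Vtᴴ).mulVec v
        = Ut.mulVec ((St * K).mulVec (Vtᴴ.mulVec v)) := by
      rw [Matrix.mulVec_mulVec, Matrix.mulVec_mulVec]
    set y := Vtᴴ.mulVec v with hy
    have e2 : (St * K).mulVec y = (∑ j, conj (w j) * y j) • St.mulVec w := by
      rw [← Matrix.mulVec_mulVec, Kmat_mulVec, Matrix.mulVec_smul]
    set c := ∑ j, conj (w j) * y j with hc
    rw [e1, e2, Matrix.mulVec_smul, l2_smul, l2_iso_mulVec hUt]
    have hcle : ‖c‖ ≤ 1 := by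
      calc ‖c‖ ≤ l2 w * l2 y := norm_dot_le w y
        _ ≤ 1 * 1 := by
            apply mul_le_mul (le_of_eq (l2_of_unit hw)) ?_ (l2_nonneg' _) zero_le_one
            calc l2 y ≤ l2 v := l2_isoH_mulVec_le hVt v
              _ ≤ 1 := l2_le_one hv
        _ = 1 := mul_one 1
    calc ‖c‖ * l2 (St.mulVec w) ≤ 1 * l2 (St.mulVec w) :=
          mul_le_mul_of_nonneg_right hcle (l2_nonneg' _)
      _ = l2 (St.mulVec w) := one_mul _
  linarith

lemma sval_le_left [DecidableEq m] [DecidableEq p] {r : ℕ} (hr : 0 < r) {Ut : Matrix m (Fin r) ℂ} {Vt : Matrix p (Fin r) ℂ}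
    (St : Matrix (Fin r) (Fin r) ℂ) (hUt : Utᴴ * Ut = 1) (hVt : Vtᴴ * Vt = 1)
    {w : Fin r → ℂ} (hw : (∑ i, ‖w i‖ ^ 2) = 1) (Z' : Matrix m p ℂ) :
    sval Z' r ≤ l2 (Stᴴ.mulVec w) + frob (Z' - Ut * St * Vtᴴ) := by
  set K : Matrix (Fin r) (Fin r) ℂ := Kmat w with hKdef
  have hwne : w ≠ 0 := unit_ne_zero hw
  have hkerH : (Stᴴ * (1 - K)).mulVec w = 0 := by
    rw [← Matrix.mulVec_mulVec, Kmat_fix hw, Matrix.mulVec_zero]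
  have hconj : ((1 - K) * St)ᴴ = Stᴴ * (1 - K) := by
    rw [Matrix.conjTranspose_mul, Matrix.conjTranspose_sub, Matrix.conjTranspose_one,
      Kmat_conjTranspose]
  have hrank0 : ((1 - K) * St).rank < r := by
    open scoped ComplexOrder in
    have : ((1 - K) * St).rank = (Stᴴ * (1 - K)).rank := by
      rw [← hconj, Matrix.rank_conjTranspose]
    rw [this]
    exact rank_lt_of_kernel hwne hkerH
  have hrank : (Ut * ((1 - K) * St) * Vtᴴ).rank < r :=
    calc (Ut * ((1 - K) * St) * Vtᴴ).rank ≤ (Ut * ((1 - K) * St)).rank :=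
        Matrix.rank_mul_le_left _ _
      _ ≤ ((1 - K) * St).rank := Matrix.rank_mul_le_right _ _
      _ < r := hrank0
  refine le_trans (sval_le hrank) ?_
  have hZtY : Z' - Ut * ((1 - K) * St) * Vtᴴ = (Z' - Ut * St * Vtᴴ) + Ut * (K * St) * Vtᴴ := by
    rw [Matrix.sub_mul (1 : Matrix (Fin r) (Fin r) ℂ) K St, Matrix.one_mul, Matrix.mul_sub Ut, Matrix.sub_mul]
    abel
  rw [hZtY]
  apply specNorm_le
  intro v hv
  rw [Matrix.add_mulVec]
  refine le_trans (l2_add_le _ _) ?_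
  have h1 : l2 ((Z' - Ut * St * Vtᴴ).mulVec v) ≤ frob (Z' - Ut * St * Vtᴴ) :=
    l2_mulVec_le_frob _ hv
  have h2 : l2 ((Ut * (K * St) * Vtᴴ).mulVec v) ≤ l2 (Stᴴ.mulVec w) := by
    have e1 : (Ut * (K * St) * Vtᴴ).mulVec v
        = Ut.mulVec ((K * St).mulVec (Vtᴴ.mulVec v)) := by
      rw [Matrix.mulVec_mulVec, Matrix.mulVec_mulVec]
    set y := Vtᴴ.mulVec v with hy
    have e2 : (K * St).mulVec y = (∑ j, conj (w j) * (St.mulVec y) j) • w := by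
      rw [← Matrix.mulVec_mulVec, Kmat_mulVec]
    set c := ∑ j, conj (w j) * (St.mulVec y) j with hc
    rw [e1, e2, Matrix.mulVec_smul, l2_smul, l2_iso_mulVec hUt, l2_of_unit hw, mul_one]
    calc ‖c‖ = ‖∑ k, conj ((Stᴴ.mulVec w) k) * y k‖ := by rw [hc, dot_conjTranspose]
      _ ≤ l2 (Stᴴ.mulVec w) * l2 y := norm_dot_le _ _
      _ ≤ l2 (Stᴴ.mulVec w) * 1 := by
          apply mul_le_mul_of_nonneg_left ?_ (l2_nonneg' _)
          calc l2 y ≤ l2 v := l2_isoH_mulVec_le hVt v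
            _ ≤ 1 := l2_le_one hv
      _ = l2 (Stᴴ.mulVec w) := mul_one _
  linarith

lemma sval_pos [DecidableEq m] [DecidableEq p] {r : ℕ} (hr : 0 < r) {U : Matrix m (Fin r) ℂ} {S : Matrix (Fin r) (Fin r) ℂ}
    {V : Matrix p (Fin r) ℂ} (hU : Uᴴ * U = 1) (hV : Vᴴ * V = 1)
    {Znat : Matrix m p ℂ} (hSVD : Znat = U * S * Vᴴ) (hrank : Znat.rank = r) :
    0 < sval Znat r := by
  have hSrank : S.rank = r := by
    have hS1 : S = Uᴴ * Znat * V := by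
      rw [hSVD]
      calc S = (Uᴴ * U) * S * (Vᴴ * V) := by rw [hU, hV, one_mul, Matrix.mul_one]
        _ = Uᴴ * (U * S * Vᴴ) * V := by
            simp only [Matrix.mul_assoc]
    have h1 : S.rank ≤ r := by
      rw [hS1]
      calc (Uᴴ * Znat * V).rank ≤ (Uᴴ * Znat).rank := Matrix.rank_mul_le_left _ _
        _ ≤ Znat.rank := Matrix.rank_mul_le_right _ _
        _ = r := hrank
    have h2 : r ≤ S.rank := by
      calc r = Znat.rank := hrank.symm
        _ = (U * S * Vᴴ).rank := by rw [hSVD]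
        _ ≤ (U * S).rank := Matrix.rank_mul_le_left _ _
        _ ≤ S.rank := Matrix.rank_mul_le_right _ _
    omega
  obtain ⟨u₀, hu₀, hmin⟩ := exists_min_sphere hr S
  set σS := l2 (S.mulVec u₀) with hσS
  have hσpos : 0 < σS := by
    rcases lt_or_eq_of_le (l2_nonneg' (S.mulVec u₀)) with h | h
    · exact h
    · exfalso
      have hzero : S.mulVec u₀ = 0 := l2_eq_zero_imp h.symm
      have := rank_lt_of_kernel (unit_ne_zero hu₀) hzero
      omega
  have hlow : σS ≤ sval Znat r := by
    apply le_sval hr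
    intro Y hY
    have hYV : (Y * V).rank < r :=
      lt_of_le_of_lt (Matrix.rank_mul_le_left _ _) hY
    obtain ⟨u, hune, hu⟩ := exists_kernel_vec hYV
    have hYVu : Y.mulVec (V.mulVec u) = 0 := by
      rw [Matrix.mulVec_mulVec]
      exact hu
    have hlu : 0 < l2 u := l2_pos_of_ne_zero hune
    set v : p → ℂ := ((l2 u : ℂ))⁻¹ • V.mulVec u with hvdef
    have hl2Vu : l2 (V.mulVec u) = l2 u := l2_iso_mulVec hV u
    have hvnorm : l2 v = 1 := by
      rw [hvdef, l2_smul, hl2Vu]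
      simp only [norm_inv, Complex.norm_real]
      rw [Real.norm_of_nonneg (l2_nonneg' u)]
      field_simp
    have hvsum : (∑ j, ‖v j‖ ^ 2) ≤ 1 := by
      have := hvnorm
      rw [l2] at this
      nlinarith [Real.sq_sqrt (Finset.sum_nonneg
        (fun j (_ : j ∈ Finset.univ) => sq_nonneg ‖v j‖))]
    have hZv : (Znat - Y).mulVec v = ((l2 u : ℂ))⁻¹ • (U.mulVec (S.mulVec u)) := by
      rw [Matrix.sub_mulVec, hvdef]
      rw [Matrix.mulVec_smul, Matrix.mulVec_smul, hYVu, smul_zero, sub_zero]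
      congr 1
      rw [hSVD]
      calc (U * S * Vᴴ) *ᵥ (V *ᵥ u)
          = (U * S) *ᵥ (Vᴴ *ᵥ (V *ᵥ u)) := (Matrix.mulVec_mulVec _ _ _).symm
        _ = (U * S) *ᵥ u := by rw [Matrix.mulVec_mulVec u Vᴴ V, hV, Matrix.one_mulVec]
        _ = U *ᵥ (S *ᵥ u) := (Matrix.mulVec_mulVec _ _ _).symm
    calc σS = σS * ((l2 u)⁻¹ * l2 u) := by field_simp
      _ = (l2 u)⁻¹ * (σS * l2 u) := by ring
      _ ≤ (l2 u)⁻¹ * l2 (S.mulVec u) := by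
          apply mul_le_mul_of_nonneg_left (hmin u) (by positivity)
      _ = l2 ((Znat - Y).mulVec v) := by
          rw [hZv, l2_smul, l2_iso_mulVec hU]
          simp only [norm_inv, Complex.norm_real]
          rw [Real.norm_of_nonneg (l2_nonneg' u)]
      _ ≤ specNorm (Znat - Y) := le_specNorm _ hvsum
  linarith

end SvalComp


section Extra
variable {m p : Type*} [Fintype m] [Fintype p]

lemma proj_compl [DecidableEq m] {P : Matrix m m ℂ} (hP : P * P = P) :
    (1 - P) * (1 - P) = 1 - P := by
  rw [Matrix.sub_mul, Matrix.mul_sub, Matrix.mul_sub, hP]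
  simp

lemma proj_complH [DecidableEq m] {P : Matrix m m ℂ} (hPH : Pᴴ = P) :
    (1 - P)ᴴ = 1 - P := by simp [hPH]

lemma frob_sub_comm (A B : Matrix m p ℂ) : frob (A - B) = frob (B - A) := by
  rw [frob, frob]
  refine congrArg _ (Finset.sum_congr rfl fun i _ => Finset.sum_congr rfl fun j _ => ?_)
  rw [Matrix.sub_apply, Matrix.sub_apply, norm_sub_rev]

lemma l2_conj (v : m → ℂ) : l2 (fun i => conj (v i)) = l2 v := by
  simp [l2]

lemma mulVec_conjT_conj {r : ℕ} (M : Matrix (Fin r) (Fin r) ℂ) (u : Fin r → ℂ) :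
    Mᴴ.mulVec (fun j => conj (u j)) = fun i => conj ((Mᵀ.mulVec u) i) := by
  funext i
  simp only [Matrix.mulVec, dotProduct, Matrix.conjTranspose_apply, Matrix.transpose_apply,
    map_sum, _root_.map_mul, RCLike.star_def]

lemma conjT_transpose_mulVec {r : ℕ} (M : Matrix (Fin r) (Fin r) ℂ) (u : Fin r → ℂ) :
    (Mᴴᵀ).mulVec u = fun i => conj (M.mulVec (fun j => conj (u j)) i) := by
  funext i
  simp only [Matrix.mulVec, dotProduct, Matrix.conjTranspose_apply, Matrix.transpose_apply,
    map_sum, _root_.map_mul, RCLike.star_def, Complex.conj_conj]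

end Extra

/-- Lemma 1, first claim: under the local RIP at the tangent space T of
Z♮ = H(X♮), the entrywise bound on the b_j's, μ0 s ≥ 1, and provided the rank-r matrix
Z^t is within σ_r(Z♮) ε / (16 √((1+ε) μ0 s)) of Z♮ in Frobenius norm,
one has ‖A G* P_{T_t}‖ ≤ 3 √(1+ε). -/
theorem one_sided_rip_at_t {s n n1 n2 r : ℕ} {ε μ0 : ℝ}
    (hs : 0 < s) (h1 : 0 < n1) (h2 : 0 < n2) (hn : n1 + n2 = n + 1)
    (hε : ε ∈ Set.Ioc (0 : ℝ) 1) (hμ0s : 1 ≤ μ0 * s)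
    (b : Fin n → Fin s → ℂ) (hb : ∀ (j : Fin n) (ℓ : Fin s), ‖b j ℓ‖ ^ 2 ≤ μ0)
    (Xnat : Matrix (Fin s) (Fin n) ℂ)
    (U : Matrix (Fin n1 × Fin s) (Fin r) ℂ) (S : Matrix (Fin r) (Fin r) ℂ)
    (V : Matrix (Fin n2) (Fin r) ℂ)
    (hrank : (vhl hn Xnat).rank = r) (hU : Uᴴ * U = 1) (hV : Vᴴ * V = 1)
    (hSVD : vhl hn Xnat = U * S * Vᴴ)
    (hrip : ∀ Z : Matrix (Fin n1 × Fin s) (Fin n2) ℂ,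
      frob (projT U V (calG hn (calGadj hn (projT U V Z)) -
        calG hn (measAadj b (measA b (calGadj hn (projT U V Z)))))) ≤ ε * frob Z)
    (Zt : Matrix (Fin n1 × Fin s) (Fin n2) ℂ)
    (Ut : Matrix (Fin n1 × Fin s) (Fin r) ℂ) (St : Matrix (Fin r) (Fin r) ℂ)
    (Vt : Matrix (Fin n2) (Fin r) ℂ)
    (hrankt : Zt.rank = r) (hUt : Utᴴ * Ut = 1) (hVt : Vtᴴ * Vt = 1)
    (hSVDt : Zt = Ut * St * Vtᴴ)
    (hclose : frob (Zt - vhl hn Xnat) ≤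
      sval (vhl hn Xnat) r * ε / (16 * Real.sqrt ((1 + ε) * (μ0 * s)))) :
    ∀ Z : Matrix (Fin n1 × Fin s) (Fin n2) ℂ,
      l2 (measA b (calGadj hn (projT Ut Vt Z))) ≤ 3 * Real.sqrt (1 + ε) * frob Z := by
  intro Z
  have hε0 : (0:ℝ) < ε := hε.1
  have hε1 : ε ≤ 1 := hε.2
  have hμs0 : (0:ℝ) ≤ μ0 * s := le_trans zero_le_one hμ0s
  rcases Nat.eq_zero_or_pos r with hr0 | hr
  · subst hr0
    have hU0 : Ut * Utᴴ = (0 : Matrix (Fin n1 × Fin s) (Fin n1 × Fin s) ℂ) := by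
      ext i j; simp [Matrix.mul_apply]
    have hV0 : Vt * Vtᴴ = (0 : Matrix (Fin n2) (Fin n2) ℂ) := by
      ext i j; simp [Matrix.mul_apply]
    have hP0 : projT Ut Vt Z = 0 := by
      rw [projT_eq, hU0, hV0]
      simp
    rw [hP0]
    have hG0 : calGadj hn (0 : Matrix (Fin n1 × Fin s) (Fin n2) ℂ) = 0 := by
      ext l i
      simp [calGadj, Dinv, vhlAdj]
    rw [hG0]
    have hA0 : measA b (0 : Matrix (Fin s) (Fin n) ℂ) = 0 := by
      funext j; simp [measA]
    rw [hA0, l2_zero]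
    exact mul_nonneg (mul_nonneg (by norm_num) (Real.sqrt_nonneg _)) (frob_nonneg Z)
  -- Step C: the one-sided RIP bound at the reference tangent space T
  have stepC : ∀ W : Matrix (Fin n1 × Fin s) (Fin n2) ℂ,
      l2 (measA b (calGadj hn (projT U V W))) ≤ Real.sqrt (1 + ε) * frob W := by
    intro W
    have hripW := hrip W
    set X := projT U V W with hXdef
    set Y := calGadj hn X with hYdef
    set M := measAadj b (measA b Y) with hMdef
    set D := calG hn Y - calG hn M with hDdef
    -- hripW : frob (projT U V D) ≤ ε * frob W
    have eA : (frobInner Y M).re = l2 (measA b Y) ^ 2 := re_frobInner_measAadj b Y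
    have eG : frobInner Y M = frobInner X (calG hn M) := frobInner_calGadj hn X M
    have eB : (frobInner Y Y).re = frob Y ^ 2 := re_frobInner_self Y
    have eG2 : frobInner Y Y = frobInner X (calG hn Y) := frobInner_calGadj hn X Y
    have hXD : (frobInner X D).re = frob Y ^ 2 - l2 (measA b Y) ^ 2 := by
      rw [hDdef, frobInner_sub_right, Complex.sub_re, ← eG2, ← eG, eA, eB]
    have hproj : -(ε * frob W ^ 2) ≤ (frobInner X D).re := by
      have h1' : frobInner X D = frobInner X (projT U V D) := by
        conv_lhs => rw [hXdef, ← projT_projT hU hV W, ← hXdef]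
        exact frobInner_projT_comm X D
      have h5 : ‖frobInner X (projT U V D)‖ ≤ ε * frob W ^ 2 := by
        calc ‖frobInner X (projT U V D)‖ ≤ frob X * frob (projT U V D) :=
              norm_frobInner_le _ _
          _ ≤ frob W * (ε * frob W) :=
              mul_le_mul (frob_projT_le hU hV W) hripW (frob_nonneg _) (frob_nonneg _)
          _ = ε * frob W ^ 2 := by ring
      have h6 : |(frobInner X (projT U V D)).re| ≤ ‖frobInner X (projT U V D)‖ := by
        exact Complex.abs_re_le_norm _
      rw [h1']
      have h7 := neg_abs_le (frobInner X (projT U V D)).re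
      linarith
    have hYX : frob Y ≤ frob W :=
      le_trans (frob_calGadj_le hn h1 h2 X) (frob_projT_le hU hV W)
    have hYX2 : frob Y ^ 2 ≤ frob W ^ 2 := pow_le_pow_left₀ (frob_nonneg _) hYX 2
    apply l2_le_of_sq_le_sq (mul_nonneg (Real.sqrt_nonneg _) (frob_nonneg _))
    rw [mul_pow, Real.sq_sqrt (by linarith : (0:ℝ) ≤ 1 + ε)]
    nlinarith [hXD, hproj, hYX2]
  -- decomposition at the tangent space of Zt
  obtain ⟨W, hWdef⟩ : ∃ W, W = projT Ut Vt Z := ⟨_, rfl⟩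
  rw [← hWdef]
  have hWZ : frob W ≤ frob Z := by rw [hWdef]; exact frob_projT_le hUt hVt Z
  have hWfix : projT Ut Vt W = W := by rw [hWdef]; exact projT_projT hUt hVt Z
  have hsplit : W = projT U V W + (W - projT U V W) := by abel
  have hsecond : l2 (measA b (calGadj hn (W - projT U V W)))
      ≤ Real.sqrt (μ0 * s) * frob (W - projT U V W) := by
    have hsR : (0:ℝ) < (s : ℝ) := by exact_mod_cast hs
    have hμ0nn : (0:ℝ) ≤ μ0 := by nlinarith
    have hb2 := l2_measA_sq_le hμ0nn hb (calGadj hn (W - projT U V W))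
    have hcon : frob (calGadj hn (W - projT U V W)) ≤ frob (W - projT U V W) :=
      frob_calGadj_le hn h1 h2 _
    apply l2_le_of_sq_le_sq (mul_nonneg (Real.sqrt_nonneg _) (frob_nonneg _))
    rw [mul_pow, Real.sq_sqrt hμs0]
    calc l2 (measA b (calGadj hn (W - projT U V W))) ^ 2
        ≤ μ0 * s * frob (calGadj hn (W - projT U V W)) ^ 2 := hb2
      _ ≤ μ0 * s * frob (W - projT U V W) ^ 2 :=
          mul_le_mul_of_nonneg_left (pow_le_pow_left₀ (frob_nonneg _) hcon 2) hμs0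
  have hmain : l2 (measA b (calGadj hn W))
      ≤ Real.sqrt (1 + ε) * frob W + Real.sqrt (μ0 * s) * frob (W - projT U V W) := by
    calc l2 (measA b (calGadj hn W))
        = l2 (measA b (calGadj hn (projT U V W)) + measA b (calGadj hn (W - projT U V W))) := by
          rw [← measA_add, ← calGadj_add, ← hsplit]
      _ ≤ l2 (measA b (calGadj hn (projT U V W)))
          + l2 (measA b (calGadj hn (W - projT U V W))) := l2_add_le _ _
      _ ≤ Real.sqrt (1 + ε) * frob W + Real.sqrt (μ0 * s) * frob (W - projT U V W) :=
          add_le_add (stepC W) hsecond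
  -- geometric bound on frob (W - projT U V W)
  have hX2eq : W - projT U V W = (1 - U * Uᴴ) * W * (1 - V * Vᴴ) := by
    simp only [projT_eq, Matrix.sub_mul, Matrix.mul_sub, Matrix.one_mul, Matrix.mul_one,
      Matrix.mul_assoc]
    abel
  have hWdec : W = Ut * Utᴴ * W + (1 - Ut * Utᴴ) * (W * (Vt * Vtᴴ)) := by
    conv_lhs => rw [← hWfix]
    simp only [projT_eq, Matrix.sub_mul, Matrix.one_mul, Matrix.mul_assoc]
    abel
  have hsplit2 : (1 - U * Uᴴ) * W * (1 - V * Vᴴ)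
      = (1 - U * Uᴴ) * (Ut * Utᴴ * W) * (1 - V * Vᴴ)
        + (1 - U * Uᴴ) * ((1 - Ut * Utᴴ) * (W * (Vt * Vtᴴ))) * (1 - V * Vᴴ) := by
    conv_lhs => rw [hWdec]
    rw [Matrix.mul_add, Matrix.add_mul]
  have hT1 : frob ((1 - U * Uᴴ) * (Ut * Utᴴ * W) * (1 - V * Vᴴ))
      ≤ frob ((1 - U * Uᴴ) * Ut) * frob W := by
    have e : (1 - U * Uᴴ) * (Ut * Utᴴ * W) * (1 - V * Vᴴ)
        = ((1 - U * Uᴴ) * Ut) * (Utᴴ * W * (1 - V * Vᴴ)) := by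
      simp only [Matrix.mul_assoc]
    rw [e]
    calc frob (((1 - U * Uᴴ) * Ut) * (Utᴴ * W * (1 - V * Vᴴ)))
        ≤ frob ((1 - U * Uᴴ) * Ut) * frob (Utᴴ * W * (1 - V * Vᴴ)) := frob_mul_le _ _
      _ ≤ frob ((1 - U * Uᴴ) * Ut) * frob W := by
          apply mul_le_mul_of_nonneg_left ?_ (frob_nonneg _)
          calc frob (Utᴴ * W * (1 - V * Vᴴ)) ≤ frob (Utᴴ * W) :=
                frob_projR_le (proj_compl (isoProj hV)) (proj_complH (isoProjH V)) _
            _ ≤ frob W := frob_isoH_mul_le hUt W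
  have hT2 : frob ((1 - U * Uᴴ) * ((1 - Ut * Utᴴ) * (W * (Vt * Vtᴴ))) * (1 - V * Vᴴ))
      ≤ frob W * frob ((1 - V * Vᴴ) * Vt) := by
    have e : (1 - U * Uᴴ) * ((1 - Ut * Utᴴ) * (W * (Vt * Vtᴴ))) * (1 - V * Vᴴ)
        = ((1 - U * Uᴴ) * ((1 - Ut * Utᴴ) * (W * Vt))) * (Vtᴴ * (1 - V * Vᴴ)) := by
      simp only [Matrix.mul_assoc]
    rw [e]
    calc frob (((1 - U * Uᴴ) * ((1 - Ut * Utᴴ) * (W * Vt))) * (Vtᴴ * (1 - V * Vᴴ)))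
        ≤ frob ((1 - U * Uᴴ) * ((1 - Ut * Utᴴ) * (W * Vt))) * frob (Vtᴴ * (1 - V * Vᴴ)) :=
          frob_mul_le _ _
      _ ≤ frob W * frob ((1 - V * Vᴴ) * Vt) := by
          apply mul_le_mul ?_ ?_ (frob_nonneg _) (frob_nonneg _)
          · calc frob ((1 - U * Uᴴ) * ((1 - Ut * Utᴴ) * (W * Vt)))
                ≤ frob ((1 - Ut * Utᴴ) * (W * Vt)) :=
                  frob_projL_le (proj_compl (isoProj hU)) (proj_complH (isoProjH U)) _
              _ ≤ frob (W * Vt) :=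
                  frob_projL_le (proj_compl (isoProj hUt)) (proj_complH (isoProjH Ut)) _
              _ ≤ frob W := frob_mul_iso_le hVt W
          · have e2 : (Vtᴴ * (1 - V * Vᴴ))ᴴ = (1 - V * Vᴴ) * Vt := by
              rw [Matrix.conjTranspose_mul, Matrix.conjTranspose_conjTranspose,
                proj_complH (isoProjH V)]
            rw [← frob_conjTranspose (Vtᴴ * (1 - V * Vᴴ)), e2]
  have hX2 : frob (W - projT U V W)
      ≤ (frob ((1 - U * Uᴴ) * Ut) + frob ((1 - V * Vᴴ) * Vt)) * frob W := by
    rw [hX2eq, hsplit2]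
    calc frob ((1 - U * Uᴴ) * (Ut * Utᴴ * W) * (1 - V * Vᴴ)
          + (1 - U * Uᴴ) * ((1 - Ut * Utᴴ) * (W * (Vt * Vtᴴ))) * (1 - V * Vᴴ))
        ≤ frob ((1 - U * Uᴴ) * (Ut * Utᴴ * W) * (1 - V * Vᴴ))
          + frob ((1 - U * Uᴴ) * ((1 - Ut * Utᴴ) * (W * (Vt * Vtᴴ))) * (1 - V * Vᴴ)) :=
          frob_add_le _ _
      _ ≤ frob ((1 - U * Uᴴ) * Ut) * frob W + frob W * frob ((1 - V * Vᴴ) * Vt) :=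
          add_le_add hT1 hT2
      _ = (frob ((1 - U * Uᴴ) * Ut) + frob ((1 - V * Vᴴ) * Vt)) * frob W := by ring
  -- singular value control
  obtain ⟨ua, hua, hmina⟩ := exists_min_sphere hr (Stᵀ)
  obtain ⟨ub, hub, hminb⟩ := exists_min_sphere hr (Stᴴᵀ)
  have hUtSt : Ut * St = Zt * Vt := by
    rw [hSVDt, Matrix.mul_assoc, hVt, Matrix.mul_one]
  have hPuZ : (1 - U * Uᴴ) * vhl hn Xnat = 0 := by
    rw [Matrix.sub_mul, Matrix.one_mul, hSVD]
    have hUU : U * Uᴴ * (U * S * Vᴴ) = U * S * Vᴴ := by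
      calc U * Uᴴ * (U * S * Vᴴ) = U * ((Uᴴ * U) * (S * Vᴴ)) := by
            simp only [Matrix.mul_assoc]
        _ = U * (S * Vᴴ) := by rw [hU, Matrix.one_mul]
        _ = U * S * Vᴴ := by rw [Matrix.mul_assoc]
    rw [hUU, sub_self]
  have halpha : l2 (Stᵀ.mulVec ua) * frob ((1 - U * Uᴴ) * Ut) ≤ frob (Zt - vhl hn Xnat) := by
    have h1' := sigma_frob (l2_nonneg' _) hmina ((1 - U * Uᴴ) * Ut)
    rw [Matrix.transpose_transpose] at h1'
    refine le_trans h1' ?_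
    have key : Ut * St - (Zt - vhl hn Xnat) * Vt = vhl hn Xnat * Vt := by
      rw [hUtSt, Matrix.sub_mul]
      abel
    have e : ((1 - U * Uᴴ) * Ut) * St = (1 - U * Uᴴ) * ((Zt - vhl hn Xnat) * Vt) := by
      calc ((1 - U * Uᴴ) * Ut) * St = (1 - U * Uᴴ) * (Ut * St) := Matrix.mul_assoc _ _ _
        _ = (1 - U * Uᴴ) * ((Zt - vhl hn Xnat) * Vt)
            + (1 - U * Uᴴ) * (Ut * St - (Zt - vhl hn Xnat) * Vt) := by
            rw [← Matrix.mul_add]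
            congr 1
            abel
        _ = (1 - U * Uᴴ) * ((Zt - vhl hn Xnat) * Vt) := by
            rw [key, show (1 - U * Uᴴ) * (vhl hn Xnat * Vt)
                = ((1 - U * Uᴴ) * vhl hn Xnat) * Vt from (Matrix.mul_assoc _ _ _).symm,
              hPuZ, Matrix.zero_mul, add_zero]
    rw [e]
    calc frob ((1 - U * Uᴴ) * ((Zt - vhl hn Xnat) * Vt))
        ≤ frob ((Zt - vhl hn Xnat) * Vt) :=
          frob_projL_le (proj_compl (isoProj hU)) (proj_complH (isoProjH U)) _
      _ ≤ frob (Zt - vhl hn Xnat) := frob_mul_iso_le hVt _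
  have hVtSt : Vt * Stᴴ = Ztᴴ * Ut := by
    rw [hSVDt, Matrix.conjTranspose_mul, Matrix.conjTranspose_mul,
      Matrix.conjTranspose_conjTranspose]
    simp only [Matrix.mul_assoc]
    rw [hUt, Matrix.mul_one]
  have hZH : (vhl hn Xnat)ᴴ = V * (Sᴴ * Uᴴ) := by
    rw [hSVD, Matrix.conjTranspose_mul, Matrix.conjTranspose_mul,
      Matrix.conjTranspose_conjTranspose]
  have hPvZH : (1 - V * Vᴴ) * (vhl hn Xnat)ᴴ = 0 := by
    rw [hZH, Matrix.sub_mul, Matrix.one_mul]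
    calc V * (Sᴴ * Uᴴ) - V * Vᴴ * (V * (Sᴴ * Uᴴ))
        = V * (Sᴴ * Uᴴ) - V * ((Vᴴ * V) * (Sᴴ * Uᴴ)) := by simp only [Matrix.mul_assoc]
      _ = 0 := by rw [hV, Matrix.one_mul, sub_self]
  have hbeta : l2 (Stᴴᵀ.mulVec ub) * frob ((1 - V * Vᴴ) * Vt) ≤ frob (Zt - vhl hn Xnat) := by
    have h1' := sigma_frob (l2_nonneg' _) hminb ((1 - V * Vᴴ) * Vt)
    rw [Matrix.transpose_transpose] at h1'
    refine le_trans h1' ?_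
    have key : Vt * Stᴴ - (Zt - vhl hn Xnat)ᴴ * Ut = (vhl hn Xnat)ᴴ * Ut := by
      rw [hVtSt, Matrix.conjTranspose_sub, Matrix.sub_mul]
      abel
    have e : ((1 - V * Vᴴ) * Vt) * Stᴴ = (1 - V * Vᴴ) * ((Zt - vhl hn Xnat)ᴴ * Ut) := by
      calc ((1 - V * Vᴴ) * Vt) * Stᴴ = (1 - V * Vᴴ) * (Vt * Stᴴ) := Matrix.mul_assoc _ _ _
        _ = (1 - V * Vᴴ) * ((Zt - vhl hn Xnat)ᴴ * Ut)
            + (1 - V * Vᴴ) * (Vt * Stᴴ - (Zt - vhl hn Xnat)ᴴ * Ut) := by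
            rw [← Matrix.mul_add]
            congr 1
            abel
        _ = (1 - V * Vᴴ) * ((Zt - vhl hn Xnat)ᴴ * Ut) := by
            rw [key, show (1 - V * Vᴴ) * ((vhl hn Xnat)ᴴ * Ut)
                = ((1 - V * Vᴴ) * (vhl hn Xnat)ᴴ) * Ut from (Matrix.mul_assoc _ _ _).symm,
              hPvZH, Matrix.zero_mul, add_zero]
    rw [e]
    calc frob ((1 - V * Vᴴ) * ((Zt - vhl hn Xnat)ᴴ * Ut))
        ≤ frob ((Zt - vhl hn Xnat)ᴴ * Ut) :=
          frob_projL_le (proj_compl (isoProj hV)) (proj_complH (isoProjH V)) _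
      _ ≤ frob ((Zt - vhl hn Xnat)ᴴ) := frob_mul_iso_le hUt _
      _ = frob (Zt - vhl hn Xnat) := frob_conjTranspose _
  -- sval comparisons
  have hsva : sval (vhl hn Xnat) r ≤ l2 (Stᵀ.mulVec ua) + frob (Zt - vhl hn Xnat) := by
    have hwa : (∑ i, ‖(fun j => conj (ua j)) i‖ ^ 2) = 1 := by simpa using hua
    have h := sval_le_left hr St hUt hVt hwa (vhl hn Xnat)
    rw [mulVec_conjT_conj, l2_conj, ← hSVDt, frob_sub_comm] at h
    exact h
  have hsvb : sval (vhl hn Xnat) r ≤ l2 (Stᴴᵀ.mulVec ub) + frob (Zt - vhl hn Xnat) := by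
    have hwb : (∑ i, ‖(fun j => conj (ub j)) i‖ ^ 2) = 1 := by simpa using hub
    have h := sval_le_right hr St hUt hVt hwb (vhl hn Xnat)
    rw [← hSVDt, frob_sub_comm] at h
    have e : l2 (St.mulVec fun j => conj (ub j)) = l2 (Stᴴᵀ.mulVec ub) := by
      rw [conjT_transpose_mulVec, l2_conj]
    rw [e] at h
    exact h
  have hsvpos : 0 < sval (vhl hn Xnat) r := sval_pos hr hU hV hSVD hrank
  -- final arithmetic
  set σ0 := sval (vhl hn Xnat) r with hσ0
  set s1 := Real.sqrt (1 + ε) with hs1def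
  set s2 := Real.sqrt (μ0 * s) with hs2def
  set d := frob (Zt - vhl hn Xnat) with hddef
  set α := frob ((1 - U * Uᴴ) * Ut) with hαdef
  set β := frob ((1 - V * Vᴴ) * Vt) with hβdef
  set σa := l2 (Stᵀ.mulVec ua) with hσadef
  set σb := l2 (Stᴴᵀ.mulVec ub) with hσbdef
  have hs1 : 1 ≤ s1 := Real.one_le_sqrt.mpr (by linarith)
  have hs1sq : s1 ^ 2 = 1 + ε := Real.sq_sqrt (by linarith)
  have hs2 : 1 ≤ s2 := Real.one_le_sqrt.mpr hμ0s
  have hs2sq : s2 ^ 2 = μ0 * s := Real.sq_sqrt hμs0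
  have hcmul : Real.sqrt ((1 + ε) * (μ0 * s)) = s1 * s2 := Real.sqrt_mul (by linarith) _
  have hdle : d ≤ σ0 * ε / (16 * (s1 * s2)) := by
    rw [← hcmul]
    exact hclose
  have hs1pos : (0:ℝ) < s1 := by linarith
  have hs2pos : (0:ℝ) < s2 := by linarith
  have hs1s2 : 1 ≤ s1 * s2 := by nlinarith
  have hd16 : d ≤ σ0 / 16 := by
    refine le_trans hdle ?_
    rw [div_le_div_iff₀ (by nlinarith) (by norm_num)]
    nlinarith [hsvpos.le]
  have hσa_lb : 15 / 16 * σ0 ≤ σa := by linarith [hsva]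
  have hσb_lb : 15 / 16 * σ0 ≤ σb := by linarith [hsvb]
  have hαnn : 0 ≤ α := frob_nonneg _
  have hβnn : 0 ≤ β := frob_nonneg _
  have h16 : (0:ℝ) < 16 * (s1 * s2) := by nlinarith
  have hda' : σa * α * (16 * (s1 * s2)) ≤ σ0 * ε := by
    rw [← le_div_iff₀ h16]
    exact le_trans halpha hdle
  have hdb' : σb * β * (16 * (s1 * s2)) ≤ σ0 * ε := by
    rw [← le_div_iff₀ h16]
    exact le_trans hbeta hdle
  have hs2α : s2 * α ≤ s1 / 15 := by
    have k3 : 15 * (α * (s1 * s2)) ≤ ε := by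
      nlinarith [mul_nonneg hαnn (mul_nonneg hs1pos.le hs2pos.le), hsvpos]
    nlinarith [hs1pos, hε1, hs1sq]
  have hs2β : s2 * β ≤ s1 / 15 := by
    have k3 : 15 * (β * (s1 * s2)) ≤ ε := by
      nlinarith [mul_nonneg hβnn (mul_nonneg hs1pos.le hs2pos.le), hsvpos]
    nlinarith [hs1pos, hε1, hs1sq]
  -- conclude
  calc l2 (measA b (calGadj hn W))
      ≤ s1 * frob W + s2 * frob (W - projT U V W) := hmain
    _ ≤ s1 * frob W + s2 * ((α + β) * frob W) := by
        have := mul_le_mul_of_nonneg_left hX2 hs2pos.le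
        linarith
    _ = (s1 + (s2 * α + s2 * β)) * frob W := by ring
    _ ≤ (s1 + (s1 / 15 + s1 / 15)) * frob W := by
        apply mul_le_mul_of_nonneg_right ?_ (frob_nonneg W)
        linarith
    _ ≤ 3 * s1 * frob W := by
        apply mul_le_mul_of_nonneg_right ?_ (frob_nonneg W)
        linarith
    _ ≤ 3 * s1 * frob Z := by
        apply mul_le_mul_of_nonneg_left hWZ (by linarith)

end
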